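/- Let s, t ∈ S be distinct binary sequences and let m be the least index with s_m ≠ t_m. Then the least integer n with a_n^s ≠ a_n^t is exactly (4^m − 1)/3. -/

import Mathlib

noncomputable section

/-- The space of binary sequences `{0,1}^ℕ`. -/
abbrev BinSeq := ℕ → Fin 2

/-- The left-shift map `σ`. -/
def shift (s : BinSeq) : BinSeq := fun n => s (n + 1)

/-- `a : S → ℕ → ℂ` satisfies the recursion defining the coefficients `aₙˢ`:
`a₀ˢ = (−1)^{s₀}` and `a_{n+1}ˢ = −(1/(2a₀ˢ)) Σ_{i+j=n+1, i,j≥1} aᵢˢ aⱼˢ` if `4 ∤ n`,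
with the extra term `−a_{n/4}^{σ(s)}/(2a₀ˢ)` if `4 ∣ n`. -/
def IsCoeffFamily (a : BinSeq → ℕ → ℂ) : Prop :=
  (∀ s : BinSeq, a s 0 = (-1 : ℂ) ^ (s 0 : ℕ)) ∧
  (∀ (s : BinSeq) (n : ℕ), a s (n + 1) =
    if 4 ∣ n then
      -(a (shift s) (n / 4)) / (2 * a s 0)
        - (∑ i ∈ Finset.Ico 1 (n + 1), a s i * a s (n + 1 - i)) / (2 * a s 0)
    else
      -(∑ i ∈ Finset.Ico 1 (n + 1), a s i * a s (n + 1 - i)) / (2 * a s 0))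

/-- auxiliary: `Nm m = (4^m - 1)/3`. -/
def Nm : ℕ → ℕ
  | 0 => 0
  | m + 1 => 4 * Nm m + 1

lemma Nm_pow (m : ℕ) : 4 ^ m = 3 * Nm m + 1 := by
  induction m with
  | zero => simp [Nm]
  | succ m ih => rw [pow_succ, ih, Nm]; ring

lemma a0_ne {a : BinSeq → ℕ → ℂ} (ha : IsCoeffFamily a) (s : BinSeq) : a s 0 ≠ 0 := by
  rw [ha.1]
  exact pow_ne_zero _ (by norm_num)

lemma key {a : BinSeq → ℕ → ℂ} (ha : IsCoeffFamily a) :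
    ∀ m : ℕ, ∀ s t : BinSeq, (∀ k < m, s k = t k) →
      (∀ n < Nm m, a s n = a t n) ∧ (s m ≠ t m → a s (Nm m) ≠ a t (Nm m)) := by
  intro m
  induction m with
  | zero =>
    intro s t _
    refine ⟨fun n hn => absurd hn (by simp [Nm]), fun hne => ?_⟩
    simp only [Nm]
    rw [ha.1, ha.1]
    have hs : (s 0 : ℕ) = 0 ∨ (s 0 : ℕ) = 1 := by omega
    have ht : (t 0 : ℕ) = 0 ∨ (t 0 : ℕ) = 1 := by omega
    have hne' : (s 0 : ℕ) ≠ (t 0 : ℕ) := fun h => hne (Fin.ext h)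
    rcases hs with h1 | h1 <;> rcases ht with h2 | h2 <;>
      rw [h1, h2] <;> first | omega | norm_num
  | succ m ih =>
    intro s t h
    have hsh : ∀ k < m, shift s k = shift t k := fun k hk => h (k + 1) (by omega)
    obtain ⟨A, B⟩ := ih (shift s) (shift t) hsh
    have h0 : a s 0 = a t 0 := by rw [ha.1, ha.1, h 0 (by omega)]
    have part1 : ∀ n < Nm (m + 1), a s n = a t n := by
      intro n
      induction n using Nat.strong_induction_on with
      | _ n ihn =>
        intro hn
        match n with
        | 0 => exact h0
        | Nat.succ k =>
          simp only [Nm] at hn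
          have hconv : ∑ i ∈ Finset.Ico 1 (k + 1), a s i * a s (k + 1 - i)
              = ∑ i ∈ Finset.Ico 1 (k + 1), a t i * a t (k + 1 - i) := by
            refine Finset.sum_congr rfl fun i hi => ?_
            simp only [Finset.mem_Ico] at hi
            rw [ihn i (by omega) (by simp only [Nm]; omega),
              ihn (k + 1 - i) (by omega) (by simp only [Nm]; omega)]
          rw [ha.2 s k, ha.2 t k]
          split
          · next h4 =>
            have hA : a (shift s) (k / 4) = a (shift t) (k / 4) := A _ (by omega)
            rw [hA, hconv, h0]
          · rw [hconv, h0]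
    refine ⟨part1, fun hne => ?_⟩
    have hne' : shift s m ≠ shift t m := hne
    have hB := B hne'
    have hNm : Nm (m + 1) = 4 * Nm m + 1 := rfl
    rw [hNm, ha.2 s (4 * Nm m), ha.2 t (4 * Nm m),
      if_pos (dvd_mul_right 4 (Nm m)), if_pos (dvd_mul_right 4 (Nm m))]
    have hconv : ∑ i ∈ Finset.Ico 1 (4 * Nm m + 1), a s i * a s (4 * Nm m + 1 - i)
        = ∑ i ∈ Finset.Ico 1 (4 * Nm m + 1), a t i * a t (4 * Nm m + 1 - i) := by
      refine Finset.sum_congr rfl fun i hi => ?_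
      simp only [Finset.mem_Ico] at hi
      rw [part1 i (by simp only [Nm]; omega), part1 (4 * Nm m + 1 - i) (by simp only [Nm]; omega)]
    rw [hconv, h0]
    have hq : 4 * Nm m / 4 = Nm m := by omega
    rw [hq]
    intro heq
    apply hB
    have h2c : (2 : ℂ) * a t 0 ≠ 0 := mul_ne_zero two_ne_zero (a0_ne ha t)
    field_simp at heq
    rw [div_left_inj' (a0_ne ha t)] at heq
    linear_combination -heq
    
/-- If `s ≠ t` and `m` is the least index with `s m ≠ t m`, then the least `n` with
`aₙˢ ≠ aₙᵗ` exists and is exactly `(4^m − 1)/3`. -/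
theorem stmt3 (a : BinSeq → ℕ → ℂ) (ha : IsCoeffFamily a) (s t : BinSeq) (hst : s ≠ t) :
    {n : ℕ | a s n ≠ a t n}.Nonempty ∧
    sInf {n : ℕ | a s n ≠ a t n} = (4 ^ sInf {m : ℕ | s m ≠ t m} - 1) / 3 := by
  have hmne : {m : ℕ | s m ≠ t m}.Nonempty := by
    rcases Function.ne_iff.mp hst with ⟨k, hk⟩
    exact ⟨k, hk⟩
  set m := sInf {m : ℕ | s m ≠ t m} with hm
  have hm_mem : s m ≠ t m := Nat.sInf_mem hmne
  have hmin : ∀ k < m, s k = t k := fun k hk =>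
    not_not.mp (Nat.notMem_of_lt_sInf hk)
  obtain ⟨P1, P2⟩ := key ha m s t hmin
  have hmem : Nm m ∈ {n : ℕ | a s n ≠ a t n} := P2 hm_mem
  have hne : {n : ℕ | a s n ≠ a t n}.Nonempty := ⟨Nm m, hmem⟩
  refine ⟨hne, ?_⟩
  have h1 : sInf {n : ℕ | a s n ≠ a t n} ≤ Nm m := Nat.sInf_le hmem
  have h2 : ¬ sInf {n : ℕ | a s n ≠ a t n} < Nm m := fun h =>
    (Nat.sInf_mem hne) (P1 _ h)
  have h3 : sInf {n : ℕ | a s n ≠ a t n} = Nm m := by omega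
  have h4 := Nm_pow m
  omega
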